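/- Let (X_α)_{α<ω₁} be a tower of infinite subsets of ℕ with X := X_0 infinite and co-infinite. Let A = {ℕ \ X_α : α < ω₁} and let B be a family of infinite subsets of ℕ each of which is almost disjoint from X. If h : 2^ω → 2^ω is a function with h``A ⊆ B (identifying subsets of ℕ with their characteristic functions) and there are infinitely many n ∈ X such that h``[x(n)=1] ⊆ [x(n)=1], then the tower (X_α)_{α<ω₁} has a pseudointersection. -/
import Mathlib


/-- if `h : 2^ω → 2^ω` maps `A` (the complements of the tower
elements) into `B` (infinite sets almost disjoint from `X = X 0`) and for
infinitely many `n ∈ X` we have `h``[x(n)=1] ⊆ [x(n)=1]`, then the tower has a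
pseudointersection. -/
theorem stmt14
    (X : Ordinal → Set ℕ)
    (htower_inf : ∀ α < (Cardinal.aleph 1).ord, (X α).Infinite)
    (htower : ∀ α β : Ordinal, α < β → β < (Cardinal.aleph 1).ord → (X β \ X α).Finite)
    (hX0inf : (X 0).Infinite) (hX0coinf : (X 0)ᶜ.Infinite)
    (A B : Set (ℕ → Bool))
    (hA : A = {y : ℕ → Bool | ∃ α < (Cardinal.aleph 1).ord, ∀ n : ℕ, y n = true ↔ n ∉ X α})
    (hBinf : ∀ Y ∈ B, {n : ℕ | Y n = true}.Infinite)
    (hBad : ∀ Y ∈ B, ({n : ℕ | Y n = true} ∩ X 0).Finite)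
    (h : (ℕ → Bool) → (ℕ → Bool))
    (hh : h '' A ⊆ B)
    (hinf : {n ∈ X 0 |
      h '' {y : ℕ → Bool | y n = true} ⊆ {y : ℕ → Bool | y n = true}}.Infinite) :
    ∃ S : Set ℕ, S.Infinite ∧ ∀ α < (Cardinal.aleph 1).ord, (S \ X α).Finite := by
  classical
  refine ⟨_, hinf, ?_⟩
  intro α hα
  set y : ℕ → Bool := fun n => if n ∈ X α then false else true with hy
  have hyA : y ∈ A := by
    rw [hA]
    exact ⟨α, hα, fun n => by by_cases hn : n ∈ X α <;> simp [hy, hn]⟩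
  have hB : h y ∈ B := hh ⟨y, hyA, rfl⟩
  apply (hBad _ hB).subset
  rintro n ⟨⟨hn0, hsub⟩, hnX⟩
  exact ⟨hsub ⟨y, by simp [hy, hnX], rfl⟩, hn0⟩
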